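/- arXiv:2002.04567 — 8 statements merged into one kernel-verified Lean document; each statement's English description precedes it below -/
import Mathlib

section
/- Let $k$ be a commutative ring with unity, and let $s, t$ be units of $k$ satisfying $(1-s)(1-t) = 0$. Then the map $R: k \times k \to k \times k$ defined by $R(a,b) = ((1-s)a + sb,\ ta + (1-t)b)$ satisfies the set-theoretic Yang-Baxter equation. -/
/-- The Alexander biquandle map `R(a,b) = ((1-s)a + sb, ta + (1-t)b)` over a commutative
ring `k` with units `s, t` satisfying `(1-s)(1-t) = 0` satisfies the set-theoretic
Yang-Baxter equation. -/
theorem alexander_yang_baxter (k : Type*) [CommRing k] (s t : k)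
    (hs : IsUnit s) (ht : IsUnit t) (hst : (1 - s) * (1 - t) = 0)
    (R : k × k → k × k)
    (hR : ∀ a b : k, R (a, b) = ((1 - s) * a + s * b, t * a + (1 - t) * b))
    (Rl Rr : k × k × k → k × k × k)
    (hRl : ∀ a b c : k, Rl (a, b, c) = ((R (a, b)).1, (R (a, b)).2, c))
    (hRr : ∀ a b c : k, Rr (a, b, c) = (a, R (b, c))) :
    Rl ∘ Rr ∘ Rl = Rr ∘ Rl ∘ Rr := by
  funext x
  obtain ⟨a, b, c⟩ := x
  simp only [Function.comp_apply, hRl, hRr, hR]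
  refine Prod.ext ?_ (Prod.ext ?_ ?_) <;> simp
  · linear_combination (s * b - s * a) * hst
  · linear_combination (t * a + (s - t) * b - s * c) * hst
  · linear_combination (t * c - t * b) * hst
end

section
/- Let $X$ be a set with a set-theoretic Yang-Baxter operator $R$, and suppose $R(x, y) = (x, y)$ for some $x, y \in X$. If $(R \times \mathrm{Id})(\mathrm{Id} \times R)(x, y, z) = (w, u, v)$ for some $z \in X$, then $R(u, v) = (u, v)$. -/
/-- Fixed pairs of a set-theoretic Yang-Baxter operator propagate under the left
face maps: if `R(x,y) = (x,y)` and `(R × Id)(Id × R)(x,y,z) = (w,u,v)`,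
then `R(u,v) = (u,v)`. -/
theorem fixed_pair_left_propagation {X : Type*} (R : X × X → X × X)
    (hbij : Function.Bijective R)
    (Rl Rr : X × X × X → X × X × X)
    (hRl : ∀ x y z : X, Rl (x, y, z) = ((R (x, y)).1, (R (x, y)).2, z))
    (hRr : ∀ x y z : X, Rr (x, y, z) = (x, R (y, z)))
    (hYB : Rl ∘ Rr ∘ Rl = Rr ∘ Rl ∘ Rr)
    (x y z w u v : X)
    (hfix : R (x, y) = (x, y))
    (h : Rl (Rr (x, y, z)) = (w, u, v)) :
    R (u, v) = (u, v) := by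
  have h1 : Rl (x, y, z) = (x, y, z) := by rw [hRl, hfix]
  have hYBp := congrFun hYB (x, y, z)
  simp only [Function.comp_apply, h1, h] at hYBp
  obtain ⟨a, b, hab⟩ : ∃ a b, R (y, z) = (a, b) := ⟨_, _, rfl⟩
  rw [hRr, hab, hRl] at h
  rw [hRr] at hYBp
  -- hYBp : (w, u, v) = (w, R (u, v))
  have := (Prod.mk.injEq _ _ _ _ ▸ hYBp)
  exact this.2.symm
end

section
/- Let $X$ be a set with a set-theoretic Yang-Baxter operator $R$ (invertible and satisfying the Yang-Baxter equation), and suppose $R(x, y) = (x, y)$. If $(\mathrm{Id} \times R)(R \times \mathrm{Id})(z, x, y) = (u, v, w)$ for some $z \in X$, then $R(u, v) = (u, v)$. -/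
/-- Fixed pairs of a set-theoretic Yang-Baxter operator propagate under the right
face maps: if `R(x,y) = (x,y)` and `(Id × R)(R × Id)(z,x,y) = (u,v,w)`,
then `R(u,v) = (u,v)`. -/
theorem fixed_pair_right_propagation {X : Type*} (R : X × X → X × X)
    (hbij : Function.Bijective R)
    (Rl Rr : X × X × X → X × X × X)
    (hRl : ∀ x y z : X, Rl (x, y, z) = ((R (x, y)).1, (R (x, y)).2, z))
    (hRr : ∀ x y z : X, Rr (x, y, z) = (x, R (y, z)))
    (hYB : Rl ∘ Rr ∘ Rl = Rr ∘ Rl ∘ Rr)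
    (x y z u v w : X)
    (hfix : R (x, y) = (x, y))
    (h : Rr (Rl (z, x, y)) = (u, v, w)) :
    R (u, v) = (u, v) := by
  have hyb := congrFun hYB (z, x, y)
  simp only [Function.comp_apply] at hyb
  rw [hRr z x y, hfix, h, hRl u v w] at hyb
  simp only [Prod.mk.injEq] at hyb
  exact Prod.ext hyb.1 hyb.2.1
end

section
/- Let $X$ be a birack with set-theoretic Yang-Baxter operator $R$, and suppose there is a unique $y_0$ such that $R(x, y_0) = (x, y_0)$ for each $x$ (biquandle condition). Then for each $y \in X$ there exists a unique $x \in X$ such that $R(x, y) = (x, y)$. -/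
/-- In a birack satisfying the biquandle condition (for each `x` there is a unique `y`
with `R(x,y) = (x,y)`), for each `y` there is also a unique `x` with `R(x,y) = (x,y)`. -/
theorem biquandle_fixed_pair_other_side {X : Type*} (R : X × X → X × X)
    (hbij : Function.Bijective R)
    (Rl Rr : X × X × X → X × X × X)
    (hRl : ∀ x y z : X, Rl (x, y, z) = ((R (x, y)).1, (R (x, y)).2, z))
    (hRr : ∀ x y z : X, Rr (x, y, z) = (x, R (y, z)))
    (hYB : Rl ∘ Rr ∘ Rl = Rr ∘ Rl ∘ Rr)
    (hleft : ∀ a c : X, ∃! b : X, (R (a, b)).1 = c)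
    (hright : ∀ b d : X, ∃! a : X, (R (a, b)).2 = d)
    (hfix : ∀ x : X, ∃! y : X, R (x, y) = (x, y)) :
    ∀ y : X, ∃! x : X, R (x, y) = (x, y) := by
  intro y
  obtain ⟨t, hty, -⟩ := hfix y
  obtain ⟨a, hay, hauniq⟩ := hright y y
  set c := (R (a, y)).1 with hc
  have hRay : R (a, y) = (c, y) := Prod.ext rfl hay
  have key := congrFun hYB (a, y, t)
  simp only [Function.comp_apply, hRl, hRr, hRay, hty] at key
  rw [Prod.mk.injEq, Prod.mk.injEq] at key
  obtain ⟨h1, h2, -⟩ := key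
  refine ⟨c, Prod.ext h1 h2, fun x hx => ?_⟩
  exact (hauniq x (by simpa using congrArg Prod.snd hx)).trans (hauniq c h2).symm
end

section
/- Let $X$ be a set with a set-theoretic Yang-Baxter operator $R = (R_1, R_2)$. Define face maps $d_i^r, d_i^l : X^n \to X^{n-1}$ by $d_i^r = (\mathrm{Id}^{n-2} \times R_1) \circ (\mathrm{Id}^{n-3} \times R \times \mathrm{Id}) \circ \cdots \circ (\mathrm{Id}^{i-1} \times R \times \mathrm{Id}^{n-i-1})$ and $d_i^l = (R_2 \times \mathrm{Id}^{n-2}) \circ (\mathrm{Id} \times R \times \mathrm{Id}^{n-3}) \circ \cdots \circ (\mathrm{Id}^{i-2} \times R \times \mathrm{Id}^{n-i})$. Then for all $\varepsilon, \delta \in \{l, r\}$ and $1 \leq i < j \leq n$, the pre-cubical relation $d_i^\varepsilon \circ d_j^\delta = d_{j-1}^\delta \circ d_i^\varepsilon$ holds as maps $X^n \to X^{n-2}$. -/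
/-!
Face maps of the pre-cubical structure associated to a set-theoretic Yang-Baxter
operator `R = (R₁, R₂)` on a set `X`.  An `n`-tuple is modelled as a list of length `n`.

`ybFaceL R i` is the left face map `dᵢˡ`: the `i`-th entry moves to the left through the
entries before it (each passed entry `y` meeting the mover `m` is replaced by `R₂(y, m)`
while the mover becomes `R₁(y, m)`), after which the mover is deleted; the final deletion
is the `R₂ × Id^{n-2}` collapse of the composition
`(R₂ × Id^{n-2}) ∘ (Id × R × Id^{n-3}) ∘ ⋯ ∘ (Id^{i-2} × R × Id^{n-i})`.
Similarly `ybFaceR R i` is the right face map `dᵢʳ`, corresponding to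
`(Id^{n-2} × R₁) ∘ (Id^{n-3} × R × Id) ∘ ⋯ ∘ (Id^{i-1} × R × Id^{n-i-1})`.
-/

/-- The mover `m` passes leftwards through a list: each passed entry `y` becomes
`R₂ (y, m)` and the mover continues as `R₁ (y, m)`.  Returns the transformed list
together with the final mover. -/
def ybPassL {X : Type*} (R : X → X → X × X) : List X → X → List X × X
  | [], m => ([], m)
  | y :: t, m =>
      let p := ybPassL R t m
      ((R y p.2).2 :: p.1, (R y p.2).1)

/-- The mover `m` passes rightwards through a list: each passed entry `y` becomes
`R₁ (m, y)` and the mover continues as `R₂ (m, y)`; the mover is discarded at the end. -/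
def ybPassR {X : Type*} (R : X → X → X × X) : X → List X → List X
  | _, [] => []
  | m, y :: t => (R m y).1 :: ybPassR R (R m y).2 t

/-- The left Yang-Baxter face map `dᵢˡ : Xⁿ → Xⁿ⁻¹` (1-indexed `i`). -/
def ybFaceL {X : Type*} (R : X → X → X × X) (i : ℕ) (l : List X) : List X :=
  match l.drop (i - 1) with
  | [] => l.take (i - 1)
  | m :: suf => (ybPassL R (l.take (i - 1)) m).1 ++ suf

/-- The right Yang-Baxter face map `dᵢʳ : Xⁿ → Xⁿ⁻¹` (1-indexed `i`). -/
def ybFaceR {X : Type*} (R : X → X → X × X) (i : ℕ) (l : List X) : List X :=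
  match l.drop (i - 1) with
  | [] => l.take (i - 1)
  | m :: suf => l.take (i - 1) ++ ybPassR R m suf

/-- The two families of face maps, indexed by `ε ∈ {l, r}` (here `true = l`, `false = r`). -/
def ybFace {X : Type*} (R : X → X → X × X) : Bool → ℕ → List X → List X
  | true => ybFaceL R
  | false => ybFaceR R

section Helpers
variable {X : Type*} (R : X → X → X × X)

/-- Rightward pass keeping the final mover. -/
def ybPassR' : X → List X → List X × X
  | m, [] => ([], m)
  | m, y :: t => ((R m y).1 :: (ybPassR' (R m y).2 t).1, (ybPassR' (R m y).2 t).2)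

lemma ybPassR_eq_fst : ∀ (m : X) (l : List X), ybPassR R m l = (ybPassR' R m l).1
  | _, [] => rfl
  | m, y :: t => by simp [ybPassR, ybPassR', ybPassR_eq_fst]

lemma ybPassR'_length : ∀ (m : X) (l : List X), (ybPassR' R m l).1.length = l.length
  | _, [] => rfl
  | m, y :: t => by simp [ybPassR', ybPassR'_length]

lemma ybPassL_length : ∀ (l : List X) (m : X), (ybPassL R l m).1.length = l.length
  | [], _ => rfl
  | y :: t, m => by simp [ybPassL, ybPassL_length]

lemma ybPassR'_append : ∀ (u v : List X) (m : X),
    ybPassR' R m (u ++ v) =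
      ((ybPassR' R m u).1 ++ (ybPassR' R (ybPassR' R m u).2 v).1,
       (ybPassR' R (ybPassR' R m u).2 v).2)
  | [], v, m => by simp [ybPassR']
  | y :: t, v, m => by simp [ybPassR', ybPassR'_append]

lemma ybPassL_append : ∀ (u v : List X) (m : X),
    ybPassL R (u ++ v) m =
      ((ybPassL R u (ybPassL R v m).2).1 ++ (ybPassL R v m).1,
       (ybPassL R u (ybPassL R v m).2).2)
  | [], v, m => by simp [ybPassL]
  | y :: t, v, m => by simp [ybPassL, ybPassL_append]

lemma ybFaceR_app (k : ℕ) (P : List X) (m : X) (suf : List X) (hk : k = P.length + 1) :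
    ybFaceR R k (P ++ m :: suf) = P ++ ybPassR R m suf := by
  subst hk
  unfold ybFaceR
  rw [Nat.add_sub_cancel, List.drop_left, List.take_left]

lemma ybFaceL_app (k : ℕ) (P : List X) (m : X) (suf : List X) (hk : k = P.length + 1) :
    ybFaceL R k (P ++ m :: suf) = (ybPassL R P m).1 ++ suf := by
  subst hk
  unfold ybFaceL
  rw [Nat.add_sub_cancel, List.drop_left, List.take_left]

end Helpers

section YB
variable {X : Type*} (R : X → X → X × X)

/-- Two successive rightward passes commute via a crossing. -/
lemma ybRR
    (yb1 : ∀ x y z : X, (R (R x y).1 (R (R x y).2 z).1).1 = (R x (R y z).1).1)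
    (yb2 : ∀ x y z : X, (R (R x y).1 (R (R x y).2 z).1).2 = (R (R x (R y z).1).2 (R y z).2).1)
    (yb3 : ∀ x y z : X, (R (R x y).2 z).2 = (R (R x (R y z).1).2 (R y z).2).2) : ∀ (C : List X) (x y : X),
    ybPassR R x (ybPassR R y C) = ybPassR R (R x y).1 (ybPassR R (R x y).2 C)
  | [], x, y => rfl
  | c :: t, x, y => by
    simp only [ybPassR]
    rw [ybRR yb1 yb2 yb3 t, yb1 x y c, yb2 x y c, yb3 x y c]

/-- Two successive leftward passes commute via a crossing. -/
lemma ybLL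
    (yb1 : ∀ x y z : X, (R (R x y).1 (R (R x y).2 z).1).1 = (R x (R y z).1).1)
    (yb2 : ∀ x y z : X, (R (R x y).1 (R (R x y).2 z).1).2 = (R (R x (R y z).1).2 (R y z).2).1)
    (yb3 : ∀ x y z : X, (R (R x y).2 z).2 = (R (R x (R y z).1).2 (R y z).2).2) : ∀ (A : List X) (a b : X),
    (ybPassL R (ybPassL R A (R a b).1).1 (R a b).2).1
      = (ybPassL R (ybPassL R A a).1 b).1 ∧
    (ybPassL R (ybPassL R A (R a b).1).1 (R a b).2).2
      = (R (ybPassL R A a).2 (ybPassL R (ybPassL R A a).1 b).2).2 ∧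
    (ybPassL R A (R a b).1).2
      = (R (ybPassL R A a).2 (ybPassL R (ybPassL R A a).1 b).2).1
  | [], a, b => ⟨rfl, rfl, rfl⟩
  | y :: t, a, b => by
    obtain ⟨h1, h2, h3⟩ := ybLL yb1 yb2 yb3 t a b
    simp only [ybPassL]
    rw [h1, h2, h3, yb1 y (ybPassL R t a).2 (ybPassL R (ybPassL R t a).1 b).2,
        yb2 y (ybPassL R t a).2 (ybPassL R (ybPassL R t a).1 b).2,
        yb3 y (ybPassL R t a).2 (ybPassL R (ybPassL R t a).1 b).2]
    exact ⟨rfl, rfl, rfl⟩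

/-- A rightward and a leftward pass crossing each other. -/
lemma ybML
    (yb1 : ∀ x y z : X, (R (R x y).1 (R (R x y).2 z).1).1 = (R x (R y z).1).1)
    (yb2 : ∀ x y z : X, (R (R x y).1 (R (R x y).2 z).1).2 = (R (R x (R y z).1).2 (R y z).2).1)
    (yb3 : ∀ x y z : X, (R (R x y).2 z).2 = (R (R x (R y z).1).2 (R y z).2).2) : ∀ (B : List X) (a b : X),
    (ybPassL R (ybPassR' R a B).1 (R (ybPassR' R a B).2 b).1).1
      = (ybPassR' R (R a (ybPassL R B b).2).2 (ybPassL R B b).1).1 ∧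
    (ybPassL R (ybPassR' R a B).1 (R (ybPassR' R a B).2 b).1).2
      = (R a (ybPassL R B b).2).1 ∧
    (R (ybPassR' R a B).2 b).2
      = (ybPassR' R (R a (ybPassL R B b).2).2 (ybPassL R B b).1).2
  | [], a, b => ⟨rfl, rfl, rfl⟩
  | y :: t, a, b => by
    obtain ⟨h1, h2, h3⟩ := ybML yb1 yb2 yb3 t (R a y).2 b
    simp only [ybPassL, ybPassR']
    rw [h1, h2, h3, yb1 a y (ybPassL R t b).2, yb2 a y (ybPassL R t b).2,
        yb3 a y (ybPassL R t b).2]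
    exact ⟨rfl, rfl, rfl⟩

end YB


/-- The face maps of a set-theoretic Yang-Baxter operator satisfy the pre-cubical
relations `dᵢᵉ ∘ dⱼᵈ = dⱼ₋₁ᵈ ∘ dᵢᵉ` for `1 ≤ i < j ≤ n` and `ε, δ ∈ {l, r}`. -/
theorem yb_face_precubical {X : Type*} (R : X → X → X × X)
    (Rl Rr : X × X × X → X × X × X)
    (hRl : ∀ x y z : X, Rl (x, y, z) = ((R x y).1, (R x y).2, z))
    (hRr : ∀ x y z : X, Rr (x, y, z) = (x, (R y z).1, (R y z).2))
    (hYB : Rl ∘ Rr ∘ Rl = Rr ∘ Rl ∘ Rr)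
    (n i j : ℕ) (hi : 1 ≤ i) (hij : i < j) (hj : j ≤ n)
    (l : List X) (hl : l.length = n) (ε δ : Bool) :
    ybFace R ε i (ybFace R δ j l) = ybFace R δ (j - 1) (ybFace R ε i l) := by
  have yb : ∀ x y z : X,
      (R (R x y).1 (R (R x y).2 z).1).1 = (R x (R y z).1).1 ∧
      (R (R x y).1 (R (R x y).2 z).1).2 = (R (R x (R y z).1).2 (R y z).2).1 ∧
      (R (R x y).2 z).2 = (R (R x (R y z).1).2 (R y z).2).2 := by
    intro x y z
    have h := congrFun hYB (x, y, z)
    simp only [Function.comp_apply, hRl, hRr, Prod.mk.injEq] at h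
    exact h
  have yb1 := fun x y z => (yb x y z).1
  have yb2 := fun x y z => (yb x y z).2.1
  have yb3 := fun x y z => (yb x y z).2.2
  subst hl
  -- decompose the list around positions i and j
  obtain ⟨a, r, har⟩ : ∃ a r, l.drop (i - 1) = a :: r := by
    rcases hd : l.drop (i - 1) with _ | ⟨a, r⟩
    · exfalso
      have := congrArg List.length hd
      simp at this
      omega
    · exact ⟨a, r, rfl⟩
  have hrlen : r.length = l.length - i := by
    have := congrArg List.length har
    simp at this
    omega
  obtain ⟨b, C, hbC⟩ : ∃ b C, r.drop (j - i - 1) = b :: C := by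
    rcases hd : r.drop (j - i - 1) with _ | ⟨b, C⟩
    · exfalso
      have := congrArg List.length hd
      simp [hrlen] at this
      omega
    · exact ⟨b, C, rfl⟩
  set A := l.take (i - 1) with hAdef
  set B := r.take (j - i - 1) with hBdef
  have hAlen : A.length = i - 1 := by simp [hAdef]; omega
  have hBlen : B.length = j - i - 1 := by simp [hBdef, hrlen]; omega
  have hr : r = B ++ b :: C := by
    conv_lhs => rw [← List.take_append_drop (j - i - 1) r]
    rw [hbC]
  have hdec : l = A ++ a :: (B ++ b :: C) := by
    conv_lhs => rw [← List.take_append_drop (i - 1) l]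
    rw [har, hr]
  rw [hdec]
  -- position facts
  have hi' : i = A.length + 1 := by omega
  have hj' : j = (A ++ a :: B).length + 1 := by simp; omega
  -- generic splitting of a rightward pass
  have EpassGen : ∀ (m : X) (u v : List X),
      ybPassR R m (u ++ v) = ybPassR R m u ++ ybPassR R (ybPassR' R m u).2 v := by
    intro m u v
    rw [ybPassR_eq_fst, ybPassR'_append]
    simp [← ybPassR_eq_fst]
  have Ecras : ∀ (m m' : X) (t : List X),
      ybPassR R m (m' :: t) = (R m m').1 :: ybPassR R (R m m').2 t := fun _ _ _ => rfl
  -- face j computations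
  have EjR : ybFaceR R j (A ++ a :: (B ++ b :: C)) = A ++ a :: (B ++ ybPassR R b C) := by
    rw [show A ++ a :: (B ++ b :: C) = (A ++ a :: B) ++ b :: C from by simp,
        ybFaceR_app R j _ b C hj']
    simp
  have EjL : ybFaceL R j (A ++ a :: (B ++ b :: C))
      = (ybPassL R A (R a (ybPassL R B b).2).1).1
        ++ (R a (ybPassL R B b).2).2 :: ((ybPassL R B b).1 ++ C) := by
    rw [show A ++ a :: (B ++ b :: C) = (A ++ a :: B) ++ b :: C from by simp,
        ybFaceL_app R j _ b C hj', ybPassL_append]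
    simp [ybPassL]
  cases ε <;> cases δ <;> simp only [ybFace]
  · -- ε = r, δ = r
    rw [EjR, ybFaceR_app R i A a _ hi', ybFaceR_app R i A a _ hi',
        EpassGen a B (ybPassR R b C), EpassGen a B (b :: C),
        Ecras, show A ++ (ybPassR R a B ++ (R (ybPassR' R a B).2 b).1
            :: ybPassR R (R (ybPassR' R a B).2 b).2 C)
          = (A ++ ybPassR R a B) ++ (R (ybPassR' R a B).2 b).1
            :: ybPassR R (R (ybPassR' R a B).2 b).2 C from by simp,
        ybFaceR_app R (j-1) (A ++ ybPassR R a B) _ _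
          (by simp [ybPassR_eq_fst, ybPassR'_length]; omega),
        ybRR R yb1 yb2 yb3 C (ybPassR' R a B).2 b]
    simp
  · -- ε = r, δ = l
    rw [EjL, ybFaceR_app R i _ _ _ (by simp [ybPassL_length]; omega),
        ybFaceR_app R i A a _ hi',
        EpassGen (R a (ybPassL R B b).2).2 (ybPassL R B b).1 C,
        EpassGen a B (b :: C), Ecras,
        show A ++ (ybPassR R a B ++ (R (ybPassR' R a B).2 b).1
            :: ybPassR R (R (ybPassR' R a B).2 b).2 C)
          = (A ++ ybPassR R a B) ++ (R (ybPassR' R a B).2 b).1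
            :: ybPassR R (R (ybPassR' R a B).2 b).2 C from by simp,
        ybFaceL_app R (j-1) (A ++ ybPassR R a B) _ _
          (by simp [ybPassR_eq_fst, ybPassR'_length]; omega),
        ybPassL_append]
    obtain ⟨m1, m2, m3⟩ := ybML R yb1 yb2 yb3 B a b
    rw [ybPassR_eq_fst R a B, m1, m2, m3]
    simp [← ybPassR_eq_fst]
  · -- ε = l, δ = r
    rw [EjR, ybFaceL_app R i A a _ hi', ybFaceL_app R i A a _ hi',
        show (ybPassL R A a).1 ++ (B ++ b :: C)
          = ((ybPassL R A a).1 ++ B) ++ b :: C from by simp,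
        ybFaceR_app R (j-1) ((ybPassL R A a).1 ++ B) b C
          (by simp [ybPassL_length]; omega)]
    simp
  · -- ε = l, δ = l
    rw [EjL, ybFaceL_app R i _ _ _ (by simp [ybPassL_length]; omega),
        ybFaceL_app R i A a _ hi',
        show (ybPassL R A a).1 ++ (B ++ b :: C)
          = ((ybPassL R A a).1 ++ B) ++ b :: C from by simp,
        ybFaceL_app R (j-1) ((ybPassL R A a).1 ++ B) b C
          (by simp [ybPassL_length]; omega),
        ybPassL_append,
        (ybLL R yb1 yb2 yb3 A a (ybPassL R B b).2).1]
    simp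
end

section
/- Let $X$ be a biquandle with operator $R$, and for $(x_1, \ldots, x_n) \in X^n$ with $R(x_j, x_{j+1}) = (x_j, x_{j+1})$ for some $j \leq n-1$, the terms $d_{j,n}^l$ and $d_{j+1,n}^l$ applied to $(x_1, \ldots, x_n)$ are equal: $d_{j+1,n}^l(x_1, \ldots, x_n) = d_{j,n}^l(x_1, \ldots, x_n)$. Similarly $d_{j+1,n}^r(x_1, \ldots, x_n) = d_{j,n}^r(x_1, \ldots, x_n)$. -/
lemma ybPassL_append_singleton {X : Type*} (R : X → X → X × X) (u : List X) (a b : X) :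
    ybPassL R (u ++ [a]) b =
      ((ybPassL R u (R a b).1).1 ++ [(R a b).2], (ybPassL R u (R a b).1).2) := by
  induction u with
  | nil => simp [ybPassL]
  | cons y t ih => simp [ybPassL, ih]

/-- If the adjacent pair at positions `(j, j+1)` of a tuple is fixed by `R`
(where `j = s.length + 1`), then the faces at `j` and `j + 1` coincide, both for
the left face maps and for the right face maps; this is why these terms cancel
in the Yang-Baxter boundary map on degenerate chains. -/
theorem yb_adjacent_faces_cancel {X : Type*} (R : X → X → X × X)
    (Rl Rr : X × X × X → X × X × X)
    (hRl : ∀ x y z : X, Rl (x, y, z) = ((R x y).1, (R x y).2, z))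
    (hRr : ∀ x y z : X, Rr (x, y, z) = (x, (R y z).1, (R y z).2))
    (hYB : Rl ∘ Rr ∘ Rl = Rr ∘ Rl ∘ Rr)
    (s t : List X) (a b : X) (hfix : R a b = (a, b)) :
    ybFaceL R (s.length + 2) (s ++ a :: b :: t) =
      ybFaceL R (s.length + 1) (s ++ a :: b :: t) ∧
    ybFaceR R (s.length + 2) (s ++ a :: b :: t) =
      ybFaceR R (s.length + 1) (s ++ a :: b :: t) := by
  have hd2 : (s ++ a :: b :: t).drop (s.length + 1) = b :: t := by
    simp [List.drop_append]
  have hd1 : (s ++ a :: b :: t).drop s.length = a :: b :: t := by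
    simp [List.drop_append]
  have ht2 : (s ++ a :: b :: t).take (s.length + 1) = s ++ [a] := by
    simp [List.take_append]
  have ht1 : (s ++ a :: b :: t).take s.length = s := by
    simp [List.take_append]
  constructor
  · show ybFaceL R (s.length + 2) _ = ybFaceL R (s.length + 1) _
    unfold ybFaceL
    simp only [Nat.add_sub_cancel, show s.length + 2 - 1 = s.length + 1 from rfl,
      hd2, hd1, ht2, ht1]
    rw [ybPassL_append_singleton, hfix]
    simp
  · show ybFaceR R (s.length + 2) _ = ybFaceR R (s.length + 1) _
    unfold ybFaceR
    simp only [Nat.add_sub_cancel, show s.length + 2 - 1 = s.length + 1 from rfl,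
      hd2, hd1, ht2, ht1]
    rw [show ybPassR R a (b :: t) = (R a b).1 :: ybPassR R (R a b).2 t from rfl, hfix]
    simp
end

section
/- For the cyclic biquandle $C_n$ with $R(i,j) = (j+1, i-1)$ on $\mathbb{Z}_n$, the first set-theoretic Yang-Baxter homology group is $H_1^{YB}(C_n) \cong \mathbb{Z} \oplus \mathbb{Z}_n$. -/
/-- The first set-theoretic Yang-Baxter homology group of the cyclic biquandle
`Cₙ` (where `R(i,j) = (j+1, i-1)` on `ℤ/n`) is `ℤ ⊕ ℤₙ`.  Here `∂₁ = 0`, so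
`H₁ = ℤ[ℤₙ] / im ∂₂` with `∂₂(i,j) = (i-1) - (i) - (j) + (j+1)`. -/
theorem cyclic_biquandle_first_homology (n : ℕ) (hn : 1 ≤ n) :
    Nonempty (((ZMod n →₀ ℤ) ⧸ AddSubgroup.closure
        {c : ZMod n →₀ ℤ | ∃ i j : ZMod n,
          c = Finsupp.single (i - 1) 1 - Finsupp.single i 1
              - Finsupp.single j 1 + Finsupp.single (j + 1) 1})
      ≃+ ℤ × ZMod n) := by
  classical
  haveI : NeZero n := ⟨by omega⟩
  set H : AddSubgroup (ZMod n →₀ ℤ) := AddSubgroup.closure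
      {c : ZMod n →₀ ℤ | ∃ i j : ZMod n,
        c = Finsupp.single (i - 1) 1 - Finsupp.single i 1
            - Finsupp.single j 1 + Finsupp.single (j + 1) 1} with hH
  -- the augmentation / weight homomorphism
  let φ : (ZMod n →₀ ℤ) →+ ℤ × ZMod n :=
    Finsupp.liftAddHom (fun k => zmultiplesHom (ℤ × ZMod n) (1, k))
  have hφ_single : ∀ k : ZMod n, φ (Finsupp.single k 1) = (1, k) := by
    intro k
    simp [φ, Finsupp.liftAddHom_apply_single]
  have hker : H ≤ φ.ker := by
    rw [hH, AddSubgroup.closure_le]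
    rintro c ⟨i, j, rfl⟩
    simp only [SetLike.mem_coe, AddMonoidHom.mem_ker, map_add, map_sub, hφ_single]
    rw [Prod.ext_iff]
    constructor
    · simp
    · simp only [Prod.fst_add, Prod.fst_sub, Prod.snd_add, Prod.snd_sub, Prod.snd_zero]
      ring
  let π : (ZMod n →₀ ℤ) →+ (ZMod n →₀ ℤ) ⧸ H := QuotientAddGroup.mk' H
  let e : ZMod n → (ZMod n →₀ ℤ) ⧸ H := fun k => π (Finsupp.single k 1)
  have hrel : ∀ i j : ZMod n, e (i - 1) - e i - e j + e (j + 1) = 0 := by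
    intro i j
    have hmem : (Finsupp.single (i - 1) 1 - Finsupp.single i 1
        - Finsupp.single j 1 + Finsupp.single (j + 1) (1 : ℤ)) ∈ H := by
      rw [hH]; exact AddSubgroup.subset_closure ⟨i, j, rfl⟩
    calc e (i - 1) - e i - e j + e (j + 1)
        = π (Finsupp.single (i - 1) 1 - Finsupp.single i 1
            - Finsupp.single j 1 + Finsupp.single (j + 1) 1) := by
          simp only [e, map_add, map_sub]
      _ = 0 := by
          rw [QuotientAddGroup.mk'_apply]
          exact (QuotientAddGroup.eq_zero_iff _).2 hmem
  set d : (ZMod n →₀ ℤ) ⧸ H := e 1 - e 0 with hd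
  have hstep : ∀ k : ZMod n, e (k + 1) - e k = d := by
    intro k
    have h := hrel 1 k
    rw [sub_self] at h
    have h2 : (e (k + 1) - e k) - (e 1 - e 0) = 0 := by
      rw [← h]; abel
    rw [hd]
    exact sub_eq_zero.mp h2
  have hnat : ∀ m : ℕ, e ((m : ZMod n)) = e 0 + m • d := by
    intro m
    induction m with
    | zero => rw [Nat.cast_zero, zero_nsmul, add_zero]
    | succ m ih =>
      have h2 : e ((m : ZMod n) + 1) = e ((m : ZMod n)) + d := by
        rw [← hstep ((m : ZMod n))]; abel
      push_cast
      rw [h2, ih, succ_nsmul, add_assoc]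
  have hval : ∀ k : ZMod n, e k = e 0 + k.val • d := by
    intro k
    conv_lhs => rw [← ZMod.natCast_zmod_val k]
    exact hnat k.val
  have hnd : n • d = 0 := by
    have h1 : ∑ k : ZMod n, (e (k + 1) - e k) = 0 := by
      rw [Finset.sum_sub_distrib, sub_eq_zero]
      exact Fintype.sum_equiv (Equiv.addRight (1 : ZMod n))
        (fun k => e (k + 1)) (fun k => e k) (fun k => rfl)
    have h2 : ∑ k : ZMod n, (e (k + 1) - e k) = n • d := by
      rw [Finset.sum_congr rfl (fun k _ => hstep k), Finset.sum_const,
        Finset.card_univ, ZMod.card]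
    rw [← h2, h1]
  have hdn : (zmultiplesHom _ d) ((n : ℕ) : ℤ) = 0 := by
    simpa [natCast_zsmul] using hnd
  let ψZ : ZMod n →+ (ZMod n →₀ ℤ) ⧸ H := ZMod.lift n ⟨zmultiplesHom _ d, hdn⟩
  have hψZ : ∀ k : ZMod n, ψZ k = k.val • d := by
    intro k
    conv_lhs => rw [← ZMod.natCast_zmod_val k]
    rw [show ((k.val : ℕ) : ZMod n) = ((k.val : ℤ) : ZMod n) by push_cast; rfl]
    rw [show ψZ (((k.val : ℤ) : ZMod n)) = (zmultiplesHom _ d) (k.val : ℤ) from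
      ZMod.lift_coe n _ _]
    simp only [zmultiplesHom_apply, natCast_zsmul]
  let φbar : ((ZMod n →₀ ℤ) ⧸ H) →+ ℤ × ZMod n := QuotientAddGroup.lift H φ hker
  let ψ : ℤ × ZMod n →+ (ZMod n →₀ ℤ) ⧸ H :=
    ((zmultiplesHom _ (e 0)).comp (AddMonoidHom.fst ℤ (ZMod n))) +
      (ψZ.comp (AddMonoidHom.snd ℤ (ZMod n)))
  have hψ_apply : ∀ (a : ℤ) (k : ZMod n), ψ (a, k) = a • e 0 + ψZ k := by
    intro a k; rfl
  have hφbar_e : ∀ k : ZMod n, φbar (e k) = (1, k) := by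
    intro k
    show φbar (π (Finsupp.single k 1)) = (1, k)
    rw [show φbar (π (Finsupp.single k 1)) = φ (Finsupp.single k 1) from rfl]
    exact hφ_single k
  have hφbar_d : φbar d = (0, 1) := by
    rw [hd, map_sub, hφbar_e, hφbar_e, Prod.ext_iff]
    constructor <;> simp
  have hright : ∀ p : ℤ × ZMod n, φbar (ψ p) = p := by
    rintro ⟨a, k⟩
    rw [hψ_apply, map_add, map_zsmul, hφbar_e, hψZ, map_nsmul, hφbar_d]
    rw [Prod.ext_iff]
    constructor
    · simp
    · simp [ZMod.natCast_zmod_val]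
  have hleft : ∀ x : (ZMod n →₀ ℤ) ⧸ H, ψ (φbar x) = x := by
    have hcomp : ψ.comp (φbar.comp π) = π := by
      apply Finsupp.addHom_ext'
      intro k
      apply AddMonoidHom.ext_int
      simp only [AddMonoidHom.comp_apply, Finsupp.singleAddHom_apply]
      rw [show φbar (π (Finsupp.single k 1)) = φ (Finsupp.single k 1) from rfl,
        hφ_single, hψ_apply, hψZ, one_zsmul, ← hval]
    intro x
    obtain ⟨c, rfl⟩ := QuotientAddGroup.mk'_surjective H x
    exact DFunLike.congr_fun hcomp c
  exact ⟨⟨⟨φbar, ψ, hleft, hright⟩, map_add φbar⟩⟩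
end

section
/- For the cyclic biquandle $C_n$ on $\mathbb{Z}_n$ with $R(i,j) = (j+1, i-1)$, the degenerate chain group $C_2^D(C_n)$ is the free abelian group on $\{(i, i-1) : i \in \mathbb{Z}_n\}$, and every such generator is a cycle of the Yang-Baxter chain complex; moreover the second degenerate homology $H_2^D(C_n) \cong \mathbb{Z}$. -/
/-- The boundary map `∂₂ : C₂ → C₁` of the set-theoretic Yang-Baxter chain complex of
the cyclic biquandle `Cₙ` (`R(i,j) = (j+1, i-1)`):
`∂₂(i,j) = (i-1) - (i) - (j) + (j+1)`. -/
noncomputable def cyclicBnd2 (n : ℕ) :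
    (ZMod n × ZMod n →₀ ℤ) →+ (ZMod n →₀ ℤ) :=
  Finsupp.liftAddHom fun p => zmultiplesHom _
    (Finsupp.single (p.1 - 1) 1 - Finsupp.single p.1 1
      - Finsupp.single p.2 1 + Finsupp.single (p.2 + 1) 1)

/-- The boundary map `∂₃ : C₃ → C₂` of the set-theoretic Yang-Baxter chain complex of
the cyclic biquandle `Cₙ`, given (up to an overall sign) by
`∂₃(x,y,z) = (y,z) - (y+1,z+1) - (x-1,z) + (x,z+1) + (x-1,y-1) - (x,y)`. -/
noncomputable def cyclicBnd3 (n : ℕ) :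
    (ZMod n × ZMod n × ZMod n →₀ ℤ) →+ (ZMod n × ZMod n →₀ ℤ) :=
  Finsupp.liftAddHom fun t => zmultiplesHom _
    (Finsupp.single (t.2.1, t.2.2) 1 - Finsupp.single (t.2.1 + 1, t.2.2 + 1) 1
      - Finsupp.single (t.1 - 1, t.2.2) 1 + Finsupp.single (t.1, t.2.2 + 1) 1
      + Finsupp.single (t.1 - 1, t.2.1 - 1) 1 - Finsupp.single (t.1, t.2.1) 1)

/-- The degenerate 2-chains of `Cₙ`: spanned by the pairs fixed by `R`. -/
noncomputable def cyclicDeg2 (n : ℕ) : AddSubgroup (ZMod n × ZMod n →₀ ℤ) :=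
  AddSubgroup.closure {c | ∃ p : ZMod n × ZMod n,
    (p.2 + 1, p.1 - 1) = p ∧ c = Finsupp.single p 1}

/-- The degenerate 3-chains of `Cₙ`: spanned by triples with an adjacent fixed pair. -/
noncomputable def cyclicDeg3 (n : ℕ) : AddSubgroup (ZMod n × ZMod n × ZMod n →₀ ℤ) :=
  AddSubgroup.closure {c | ∃ t : ZMod n × ZMod n × ZMod n,
    ((t.2.1 + 1, t.1 - 1) = (t.1, t.2.1) ∨ (t.2.2 + 1, t.2.1 - 1) = (t.2.1, t.2.2)) ∧
    c = Finsupp.single t 1}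

/- ### Auxiliary definitions and lemmas -/

/-- Generator `(i, i-1)` of the degenerate 2-chains. -/
noncomputable def eGen (n : ℕ) (i : ZMod n) : ZMod n × ZMod n →₀ ℤ :=
  Finsupp.single (i, i - 1) 1

/-- Sum of coefficients. -/
noncomputable def sigmaHom (n : ℕ) : (ZMod n × ZMod n →₀ ℤ) →+ ℤ :=
  Finsupp.liftAddHom fun _ => AddMonoidHom.id ℤ

lemma sigma_single (n : ℕ) (p : ZMod n × ZMod n) (m : ℤ) :
    sigmaHom n (Finsupp.single p m) = m := by
  simp [sigmaHom]

lemma bnd2_single (n : ℕ) (p : ZMod n × ZMod n) :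
    cyclicBnd2 n (Finsupp.single p 1) =
      Finsupp.single (p.1 - 1) 1 - Finsupp.single p.1 1
      - Finsupp.single p.2 1 + Finsupp.single (p.2 + 1) 1 := by
  simp [cyclicBnd2]

lemma bnd2_eGen (n : ℕ) (i : ZMod n) : cyclicBnd2 n (eGen n i) = 0 := by
  rw [eGen, bnd2_single]
  simp only [sub_add_cancel]
  abel

lemma bnd3_single (n : ℕ) (t : ZMod n × ZMod n × ZMod n) :
    cyclicBnd3 n (Finsupp.single t 1) =
      Finsupp.single (t.2.1, t.2.2) 1 - Finsupp.single (t.2.1 + 1, t.2.2 + 1) 1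
      - Finsupp.single (t.1 - 1, t.2.2) 1 + Finsupp.single (t.1, t.2.2 + 1) 1
      + Finsupp.single (t.1 - 1, t.2.1 - 1) 1 - Finsupp.single (t.1, t.2.1) 1 := by
  simp [cyclicBnd3]

/-- The relation subgroup: differences of consecutive generators. -/
noncomputable def relGrp (n : ℕ) : AddSubgroup (ZMod n × ZMod n →₀ ℤ) :=
  AddSubgroup.closure {c | ∃ i : ZMod n, c = eGen n i - eGen n (i + 1)}

lemma rel_mem (n : ℕ) (i : ZMod n) : eGen n i - eGen n (i + 1) ∈ relGrp n :=
  AddSubgroup.subset_closure ⟨i, rfl⟩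

/-- The image of the degenerate 3-chains is exactly the relation subgroup. -/
lemma image_eq_rel (n : ℕ) : (cyclicDeg3 n).map (cyclicBnd3 n) = relGrp n := by
  rw [cyclicDeg3, AddMonoidHom.map_closure]
  apply le_antisymm
  · rw [AddSubgroup.closure_le]
    rintro _ ⟨c, ⟨⟨x, y, z⟩, h | h, rfl⟩, rfl⟩
    · -- y + 1 = x and x - 1 = y
      simp only [Prod.mk.injEq] at h
      obtain ⟨h1, h2⟩ := h
      subst h1
      rw [bnd3_single]
      have : eGen n y - eGen n (y + 1) ∈ relGrp n := rel_mem n y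
      rw [SetLike.mem_coe]
      convert this using 1
      simp only [eGen, add_sub_cancel_right]
      abel
    · -- z + 1 = y and y - 1 = z
      simp only [Prod.mk.injEq] at h
      obtain ⟨h1, h2⟩ := h
      subst h2
      rw [bnd3_single]
      have : eGen n y - eGen n (y + 1) ∈ relGrp n := rel_mem n y
      rw [SetLike.mem_coe]
      convert this using 1
      simp only [eGen, add_sub_cancel_right, sub_add_cancel]
      abel
  · rw [relGrp, AddSubgroup.closure_le]
    rintro _ ⟨i, rfl⟩
    refine AddSubgroup.subset_closure ⟨Finsupp.single (i + 1, i, 0) 1,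
      ⟨(i + 1, i, 0), Or.inl (by simp), rfl⟩, ?_⟩
    rw [bnd3_single]
    simp only [add_sub_cancel_right]
    rw [eGen, eGen, add_sub_cancel_right]
    abel

lemma rel_le_ker_sigma (n : ℕ) : relGrp n ≤ (sigmaHom n).ker := by
  rw [relGrp, AddSubgroup.closure_le]
  rintro _ ⟨i, rfl⟩
  simp [AddMonoidHom.mem_ker, eGen, sigma_single]

lemma eGen_sub_eGen_zero_mem (n : ℕ) [NeZero n] (i : ZMod n) :
    eGen n i - eGen n 0 ∈ relGrp n := by
  have key : ∀ k : ℕ, eGen n (k : ZMod n) - eGen n 0 ∈ relGrp n := by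
    intro k
    induction k with
    | zero => simpa using (relGrp n).zero_mem
    | succ k ih =>
      have h1 : eGen n ((k : ZMod n) + 1) - eGen n (k : ZMod n) ∈ relGrp n := by
        have := (relGrp n).neg_mem (rel_mem n (k : ZMod n))
        rwa [neg_sub] at this
      have := (relGrp n).add_mem h1 ih
      push_cast
      convert this using 1
      abel
  have := key i.val
  rwa [ZMod.natCast_rightInverse i] at this

/-- Every degenerate 2-chain is a relation plus a multiple of `eGen 0`. -/
lemma deg2_decomp (n : ℕ) [NeZero n] (c : ZMod n × ZMod n →₀ ℤ)
    (hc : c ∈ cyclicDeg2 n) : c - sigmaHom n c • eGen n 0 ∈ relGrp n := by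
  induction hc using AddSubgroup.closure_induction with
  | mem c hc =>
    obtain ⟨⟨p1, p2⟩, hp, rfl⟩ := hc
    simp only [Prod.mk.injEq] at hp
    obtain ⟨h1, h2⟩ := hp
    subst h2
    rw [sigma_single, one_smul]
    exact eGen_sub_eGen_zero_mem n p1
  | zero => simpa using (relGrp n).zero_mem
  | add a b _ _ ha hb =>
    have := (relGrp n).add_mem ha hb
    rw [map_add]
    convert this using 1
    rw [add_smul]; abel
  | neg a _ ha =>
    have := (relGrp n).neg_mem ha
    rw [map_neg]
    convert this using 1
    rw [neg_smul]; abel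

lemma eGen_mem_deg2 (n : ℕ) (i : ZMod n) : eGen n i ∈ cyclicDeg2 n := by
  refine AddSubgroup.subset_closure ⟨(i, i - 1), ?_, rfl⟩
  simp

/-- For the cyclic biquandle `Cₙ`: the degenerate pairs are exactly the `(i, i-1)`, so
`C₂ᴰ(Cₙ)` is the free abelian group on `{(i, i-1)}`; each such generator is a cycle;
and the second degenerate homology `H₂ᴰ(Cₙ) = ker(∂₂|_{C₂ᴰ}) / ∂₃(C₃ᴰ)` is `ℤ`. -/
theorem cyclic_biquandle_degenerate_homology (n : ℕ) (hn : 1 ≤ n) :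
    (∀ p : ZMod n × ZMod n, (p.2 + 1, p.1 - 1) = p ↔ p.2 = p.1 - 1) ∧
    (cyclicDeg2 n = AddSubgroup.closure
      {c | ∃ i : ZMod n, c = Finsupp.single (i, i - 1) (1 : ℤ)}) ∧
    (∀ i : ZMod n, cyclicBnd2 n (Finsupp.single (i, i - 1) 1) = 0) ∧
    Nonempty ((↥(cyclicDeg2 n ⊓ (cyclicBnd2 n).ker) ⧸
        (((cyclicDeg3 n).map (cyclicBnd3 n)).addSubgroupOf
          (cyclicDeg2 n ⊓ (cyclicBnd2 n).ker)))
      ≃+ ℤ) := by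
  haveI : NeZero n := ⟨by omega⟩
  refine ⟨?_, ?_, ?_, ?_⟩
  · rintro ⟨p1, p2⟩
    simp only [Prod.mk.injEq]
    constructor
    · rintro ⟨h1, h2⟩
      exact h2.symm
    · intro h
      subst h
      exact ⟨by ring, rfl⟩
  · rw [cyclicDeg2]
    congr 1
    ext c
    constructor
    · rintro ⟨⟨p1, p2⟩, hp, rfl⟩
      simp only [Prod.mk.injEq] at hp
      obtain ⟨h1, h2⟩ := hp
      subst h2
      exact ⟨p1, rfl⟩
    · rintro ⟨i, rfl⟩
      exact ⟨(i, i - 1), by simp, rfl⟩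
  · exact fun i => bnd2_eGen n i
  · -- the homology computation
    set H := cyclicDeg2 n ⊓ (cyclicBnd2 n).ker with hH
    set N := ((cyclicDeg3 n).map (cyclicBnd3 n)).addSubgroupOf H with hN
    have hNker : ∀ x ∈ N, (sigmaHom n).comp H.subtype x = 0 := by
      intro x hx
      rw [hN, AddSubgroup.mem_addSubgroupOf, image_eq_rel] at hx
      exact rel_le_ker_sigma n hx
    let φ : (↥H ⧸ N) →+ ℤ := QuotientAddGroup.lift N ((sigmaHom n).comp H.subtype) hNker
    have he0 : eGen n 0 ∈ H := ⟨eGen_mem_deg2 n 0, bnd2_eGen n 0⟩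
    have hsurj : Function.Surjective φ := by
      intro m
      refine ⟨QuotientAddGroup.mk ⟨m • eGen n 0, H.zsmul_mem he0 m⟩, ?_⟩
      simp only [φ, QuotientAddGroup.lift_mk]
      simp [eGen, sigma_single]
      exact sigma_single n _ m
    have hinj : Function.Injective φ := by
      rw [injective_iff_map_eq_zero]
      intro q hq
      induction q using QuotientAddGroup.induction_on with
      | H x =>
        change (sigmaHom n).comp H.subtype x = 0 at hq
        simp only [AddMonoidHom.comp_apply, AddSubgroup.coe_subtype] at hq
        rw [QuotientAddGroup.eq_zero_iff, hN, AddSubgroup.mem_addSubgroupOf, image_eq_rel]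
        have hx2 : (x : ZMod n × ZMod n →₀ ℤ) ∈ cyclicDeg2 n := x.2.1
        have := deg2_decomp n x hx2
        rw [hq, zero_smul, sub_zero] at this
        exact this
    exact ⟨AddEquiv.ofBijective φ ⟨hinj, hsurj⟩⟩
end
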